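/- Let G₁, G₂ be symmetric positive definite matrices and A have full row rank. If (c_i, μ_i) solve the KKT systems with matrices G_i and the same right-hand side b, then c₁ − c₂ = [G₁⁻¹ − G₁⁻¹Aᵀ(AG₁⁻¹Aᵀ)⁻¹AG₁⁻¹](G₂ − G₁) c₂. -/

import Mathlib

open Matrix

lemma aux_inj {n m : ℕ} (A : Matrix (Fin m) (Fin n) ℝ) (hA : A.rank = m) :
    Function.Injective (fun x : Fin m → ℝ => Aᵀ *ᵥ x) := by
  have hrk : Aᵀ.rank = m := by rw [A.rank_transpose, hA]
  have h1 : Module.finrank ℝ (LinearMap.range Aᵀ.mulVecLin) = m := hrk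
  have h2 := LinearMap.finrank_range_add_finrank_ker Aᵀ.mulVecLin
  rw [h1] at h2
  simp only [Module.finrank_pi, Fintype.card_fin] at h2
  have hker : Module.finrank ℝ (LinearMap.ker Aᵀ.mulVecLin) = 0 := by omega
  have : LinearMap.ker Aᵀ.mulVecLin = ⊥ := Submodule.finrank_eq_zero.mp hker
  exact LinearMap.ker_eq_bot.mp this

lemma aux_posdef {n m : ℕ} (G : Matrix (Fin n) (Fin n) ℝ)
    (A : Matrix (Fin m) (Fin n) ℝ) (hG : G.PosDef) (hA : A.rank = m) :
    (A * G⁻¹ * Aᵀ).PosDef := by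
  have hinv := hG.inv
  refine posDef_iff_dotProduct_mulVec.mpr ⟨?_, fun x hx => ?_⟩
  · have := (hinv.posSemidef.mul_mul_conjTranspose_same A).isHermitian
    simpa using this
  · have hne : Aᵀ *ᵥ x ≠ 0 := by
      intro h
      exact hx (aux_inj A hA (by simpa using h))
    have h := hinv.dotProduct_mulVec_pos (x := Aᵀ *ᵥ x) hne
    have key : star x ⬝ᵥ ((A * G⁻¹ * Aᵀ) *ᵥ x) = star (Aᵀ *ᵥ x) ⬝ᵥ (G⁻¹ *ᵥ (Aᵀ *ᵥ x)) := by
      show x ⬝ᵥ _ = (Aᵀ *ᵥ x) ⬝ᵥ _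
      rw [Matrix.mul_assoc, ← mulVec_mulVec, dotProduct_mulVec, ← mulVec_transpose,
        ← mulVec_mulVec]
    rw [key]
    exact h

/-- If `(c_i, μ_i)` solve the KKT systems `[[G_i, −Aᵀ],[A, 0]][c_i; μ_i] = [0; b]`
with symmetric positive definite `G_i` and full-row-rank `A`, then
`c₁ − c₂ = [G₁⁻¹ − G₁⁻¹Aᵀ(AG₁⁻¹Aᵀ)⁻¹AG₁⁻¹](G₂ − G₁)c₂`. -/
theorem stmt13 {n m : ℕ}
    (G₁ G₂ : Matrix (Fin n) (Fin n) ℝ) (A : Matrix (Fin m) (Fin n) ℝ)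
    (b : Fin m → ℝ) (c₁ c₂ : Fin n → ℝ) (μ₁ μ₂ : Fin m → ℝ)
    (hG₁ : G₁.PosDef) (hG₂ : G₂.PosDef) (hA : A.rank = m)
    (h11 : G₁ *ᵥ c₁ - Aᵀ *ᵥ μ₁ = 0) (h12 : A *ᵥ c₁ = b)
    (h21 : G₂ *ᵥ c₂ - Aᵀ *ᵥ μ₂ = 0) (h22 : A *ᵥ c₂ = b) :
    c₁ - c₂ =
      (G₁⁻¹ - G₁⁻¹ * Aᵀ * (A * G₁⁻¹ * Aᵀ)⁻¹ * A * G₁⁻¹) *ᵥ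
        ((G₂ - G₁) *ᵥ c₂) := by
  have hSunit : IsUnit (A * G₁⁻¹ * Aᵀ) := (aux_posdef G₁ A hG₁ hA).isUnit
  have hGinv : G₁⁻¹ * G₁ = 1 :=
    Matrix.nonsing_inv_mul _ ((isUnit_iff_isUnit_det _).mp hG₁.isUnit)
  have hSinv : (A * G₁⁻¹ * Aᵀ)⁻¹ * (A * G₁⁻¹ * Aᵀ) = 1 :=
    Matrix.nonsing_inv_mul _ ((isUnit_iff_isUnit_det _).mp hSunit)
  set w := (G₂ - G₁) *ᵥ c₂ with hw
  set ν := μ₁ - μ₂ with hν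
  have e11 : G₁ *ᵥ c₁ = Aᵀ *ᵥ μ₁ := sub_eq_zero.mp h11
  have e21 : G₂ *ᵥ c₂ = Aᵀ *ᵥ μ₂ := sub_eq_zero.mp h21
  have e1 : G₁ *ᵥ (c₁ - c₂) = Aᵀ *ᵥ ν + w := by
    simp only [hw, hν, mulVec_sub, sub_mulVec, e11, e21]
    abel
  have ed : c₁ - c₂ = G₁⁻¹ *ᵥ (Aᵀ *ᵥ ν + w) := by
    rw [← e1, mulVec_mulVec, hGinv, one_mulVec]
  have e2 : A *ᵥ (c₁ - c₂) = 0 := by rw [mulVec_sub, h12, h22, sub_self]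
  have e3 : (A * G₁⁻¹ * Aᵀ) *ᵥ ν = -((A * G₁⁻¹) *ᵥ w) := by
    have h := congrArg (A *ᵥ ·) ed
    simp only [e2, mulVec_add, mulVec_mulVec, ← Matrix.mul_assoc] at h
    exact eq_neg_of_add_eq_zero_left h.symm
  have e4 : ν = -(((A * G₁⁻¹ * Aᵀ)⁻¹ * (A * G₁⁻¹)) *ᵥ w) := by
    have h := congrArg ((A * G₁⁻¹ * Aᵀ)⁻¹ *ᵥ ·) e3
    simpa [mulVec_mulVec, hSinv, one_mulVec, mulVec_neg] using h
  rw [ed, e4]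
  simp only [mulVec_add, mulVec_neg, mulVec_mulVec, sub_mulVec, Matrix.mul_assoc]
  abel
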